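/- Let d ≥ 1 be an integer and let u, v : ℝ^{d−1} × ℝ → ℂ be measurable with M² := ess sup_{y∈ℝ^{d−1}} ∫_ℝ (1 + θ²) |u(y,θ)|² dθ < ∞ and v ∈ L²(ℝ^d). Then for almost every (y,θ) ∈ ℝ^{d−1} × ℝ the integral 𝔽_pul(u,v)(y,θ) = ∫₀^{+∞} u(y, θ + δ₁X) · v(y, θ + δ₃X) dX converges absolutely, and ‖𝔽_pul(u,v)‖²_{L²(ℝ^d)} ≤ (π/|δ₁|) · M² · ‖v‖²_{L²(ℝ^d)}. -/

import Mathlib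

open MeasureTheory Set
open scoped ENNReal NNReal

lemma my_lintegral_affine (h : ℝ → ℝ≥0∞) (hm : Measurable h) (a b : ℝ) (ha : a ≠ 0) :
    ∫⁻ x : ℝ, h (b + a * x) = ENNReal.ofReal |a|⁻¹ * ∫⁻ s, h s := by
  have hT : Measurable fun x : ℝ => b + a * x := (measurable_id.const_mul a).const_add b
  have hmap : Measure.map (fun x : ℝ => b + a * x) volume
      = ENNReal.ofReal |a|⁻¹ • volume := by
    have hcomp : (fun x : ℝ => b + a * x) = (fun x : ℝ => b + x) ∘ (fun x : ℝ => a * x) := rfl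
    rw [hcomp, ← Measure.map_map (measurable_const_add b) (measurable_const_mul a),
      Real.map_volume_mul_left ha, Measure.map_smul, map_add_left_eq_self, abs_inv]
  calc ∫⁻ x, h (b + a * x)
      = ∫⁻ s, h s ∂(Measure.map (fun x : ℝ => b + a * x) volume) := (lintegral_map hm hT).symm
    _ = ENNReal.ofReal |a|⁻¹ * ∫⁻ s, h s := by rw [hmap, lintegral_smul_measure, smul_eq_mul]

lemma my_lintegral_CS {X : Type*} [MeasurableSpace X] (μ : Measure X) (f g : X → ℝ≥0∞)
    (hf : AEMeasurable f μ) (hg : AEMeasurable g μ) :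
    (∫⁻ x, f x * g x ∂μ) ^ 2 ≤ (∫⁻ x, f x ^ 2 ∂μ) * (∫⁻ x, g x ^ 2 ∂μ) := by
  have hpq : Real.HolderConjugate 2 2 := Real.HolderConjugate.two_two
  have h := ENNReal.lintegral_mul_le_Lp_mul_Lq μ hpq hf hg
  have h2 : ∀ x : ℝ≥0∞, x ^ (2 : ℝ) = x ^ 2 := fun x => by
    rw [show (2 : ℝ) = ((2 : ℕ) : ℝ) by norm_num, ENNReal.rpow_natCast]
  simp_rw [← h2]
  calc (∫⁻ x, f x * g x ∂μ) ^ (2 : ℝ)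
      ≤ ((∫⁻ x, f x ^ (2 : ℝ) ∂μ) ^ (1 / 2 : ℝ) * (∫⁻ x, g x ^ (2 : ℝ) ∂μ) ^ (1 / 2 : ℝ))
          ^ (2 : ℝ) := ENNReal.rpow_le_rpow h (by norm_num)
    _ = _ := by
        rw [ENNReal.mul_rpow_of_nonneg _ _ (by norm_num), ← ENNReal.rpow_mul,
          ← ENNReal.rpow_mul]
        norm_num

lemma my_lintegral_pi : ∫⁻ x : ℝ, (ENNReal.ofReal (1 + x ^ 2))⁻¹ = ENNReal.ofReal Real.pi := by
  have : ∀ x : ℝ, (ENNReal.ofReal (1 + x ^ 2))⁻¹ = ENNReal.ofReal ((1 + x ^ 2)⁻¹) := fun x =>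
    (ENNReal.ofReal_inv_of_pos (by positivity)).symm
  simp_rw [this]
  rw [← ofReal_integral_eq_lintegral_ofReal integrable_inv_one_add_sq
    (Filter.Eventually.of_forall fun x => by positivity), integral_univ_inv_one_add_sq]

lemma my_key {Y : Type*} [MeasureSpace Y] [SigmaFinite (volume : Measure Y)]
    (δ₁ δ₃ : ℝ) (hδ₁ : δ₁ ≠ 0) (hδ₃ : δ₃ = 1 + δ₁)
    (u v : Y × ℝ → ℂ) (hu : Measurable u) (hv : Measurable v)
    (M : ℝ)
    (huM : ∀ᵐ y : Y ∂volume,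
      (∫⁻ θ : ℝ, ENNReal.ofReal (1 + θ ^ 2) * (‖u (y, θ)‖₊ : ℝ≥0∞) ^ 2) ≤
        ENNReal.ofReal (M ^ 2))
    (hVfin : (∫⁻ p : Y × ℝ, (‖v p‖₊ : ℝ≥0∞) ^ 2) ≠ ∞) :
    (∀ᵐ p : Y × ℝ ∂volume,
      IntegrableOn (fun X => u (p.1, p.2 + δ₁ * X) * v (p.1, p.2 + δ₃ * X)) (Set.Ioi 0)) ∧
    (∫⁻ p : Y × ℝ,
        (‖∫ X in Set.Ioi (0 : ℝ), u (p.1, p.2 + δ₁ * X) * v (p.1, p.2 + δ₃ * X)‖₊ : ℝ≥0∞) ^ 2) ≤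
      ENNReal.ofReal (Real.pi / |δ₁|) * ENNReal.ofReal (M ^ 2) *
        ∫⁻ p : Y × ℝ, (‖v p‖₊ : ℝ≥0∞) ^ 2 := by
  set w : ℝ → ℝ≥0∞ := fun s => ENNReal.ofReal (1 + s ^ 2) with hw
  have hw0 : ∀ s, w s ≠ 0 := fun s => (ENNReal.ofReal_pos.2 (by positivity)).ne'
  have hwt : ∀ s, w s ≠ ∞ := fun s => ENNReal.ofReal_ne_top
  have hwm : Measurable w :=
    ENNReal.measurable_ofReal.comp ((measurable_id.pow_const 2).const_add 1)
  set G : Y × ℝ → ℝ≥0∞ := fun p =>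
    ∫⁻ X in Ioi (0 : ℝ), (‖u (p.1, p.2 + δ₁ * X)‖₊ : ℝ≥0∞) * (‖v (p.1, p.2 + δ₃ * X)‖₊ : ℝ≥0∞)
    with hG
  set A : Y × ℝ → ℝ≥0∞ := fun p =>
    ∫⁻ X in Ioi (0 : ℝ), w (p.2 + δ₁ * X) * (‖u (p.1, p.2 + δ₁ * X)‖₊ : ℝ≥0∞) ^ 2 with hA
  set B : Y × ℝ → ℝ≥0∞ := fun p =>
    ∫⁻ X in Ioi (0 : ℝ), (‖v (p.1, p.2 + δ₃ * X)‖₊ : ℝ≥0∞) ^ 2 * (w (p.2 + δ₁ * X))⁻¹ with hB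
  -- measurability of shifted maps
  have hmapm : ∀ c : ℝ, Measurable fun q : (Y × ℝ) × ℝ => ((q.1.1, q.1.2 + c * q.2) : Y × ℝ) :=
    fun c => (measurable_fst.fst).prodMk (measurable_fst.snd.add (measurable_snd.const_mul c))
  have hum : Measurable fun q : (Y × ℝ) × ℝ => (‖u (q.1.1, q.1.2 + δ₁ * q.2)‖₊ : ℝ≥0∞) := by
    exact (hu.comp (hmapm δ₁)).enorm
  have hvm : Measurable fun q : (Y × ℝ) × ℝ => (‖v (q.1.1, q.1.2 + δ₃ * q.2)‖₊ : ℝ≥0∞) := by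
    exact (hv.comp (hmapm δ₃)).enorm
  have hwqm : Measurable fun q : (Y × ℝ) × ℝ => w (q.1.2 + δ₁ * q.2) :=
    hwm.comp (measurable_fst.snd.add (measurable_snd.const_mul δ₁))
  -- Cauchy-Schwarz : G p ^ 2 ≤ A p * B p
  have hCS : ∀ p : Y × ℝ, G p ^ 2 ≤ A p * B p := by
    intro p
    set sq : ℝ → ℝ≥0∞ := fun s => ENNReal.ofReal (Real.sqrt (1 + s ^ 2)) with hsq
    have hsq2 : ∀ s, sq s ^ 2 = w s := fun s => by
      rw [hsq, ← ENNReal.ofReal_pow (Real.sqrt_nonneg _), Real.sq_sqrt (by positivity)]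
    have hsq0 : ∀ s, sq s ≠ 0 := fun s =>
      (ENNReal.ofReal_pos.2 (Real.sqrt_pos.2 (by positivity))).ne'
    have hsqt : ∀ s, sq s ≠ ∞ := fun s => ENNReal.ofReal_ne_top
    set f : ℝ → ℝ≥0∞ := fun X => sq (p.2 + δ₁ * X) * (‖u (p.1, p.2 + δ₁ * X)‖₊ : ℝ≥0∞) with hf
    set g : ℝ → ℝ≥0∞ := fun X =>
      (‖v (p.1, p.2 + δ₃ * X)‖₊ : ℝ≥0∞) * (sq (p.2 + δ₁ * X))⁻¹ with hg
    have hXm : ∀ c : ℝ, Measurable fun X : ℝ => ((p.1, p.2 + c * X) : Y × ℝ) := fun c =>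
      measurable_const.prodMk ((measurable_id.const_mul c).const_add p.2)
    have hsqm : Measurable fun X : ℝ => sq (p.2 + δ₁ * X) := by
      exact (ENNReal.measurable_ofReal.comp (Real.continuous_sqrt.measurable.comp
        ((measurable_id.pow_const 2).const_add 1))).comp
        ((measurable_id.const_mul δ₁).const_add p.2)
    have hfm : Measurable f := by
      exact hsqm.mul (hu.comp (hXm δ₁)).enorm
    have hgm : Measurable g := by
      exact ((hv.comp (hXm δ₃)).enorm).mul hsqm.inv
    have hfg : ∀ X, f X * g X
        = (‖u (p.1, p.2 + δ₁ * X)‖₊ : ℝ≥0∞) * (‖v (p.1, p.2 + δ₃ * X)‖₊ : ℝ≥0∞) := by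
      intro X
      rw [hf, hg]
      calc sq (p.2 + δ₁ * X) * (‖u (p.1, p.2 + δ₁ * X)‖₊ : ℝ≥0∞)
            * ((‖v (p.1, p.2 + δ₃ * X)‖₊ : ℝ≥0∞) * (sq (p.2 + δ₁ * X))⁻¹)
          = sq (p.2 + δ₁ * X) * (sq (p.2 + δ₁ * X))⁻¹
            * ((‖u (p.1, p.2 + δ₁ * X)‖₊ : ℝ≥0∞) * (‖v (p.1, p.2 + δ₃ * X)‖₊ : ℝ≥0∞)) := by
            ring
        _ = _ := by rw [ENNReal.mul_inv_cancel (hsq0 _) (hsqt _), one_mul]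
    have hf2 : ∀ X, f X ^ 2 = w (p.2 + δ₁ * X) * (‖u (p.1, p.2 + δ₁ * X)‖₊ : ℝ≥0∞) ^ 2 := by
      intro X; rw [hf]; rw [mul_pow, hsq2]
    have hg2 : ∀ X, g X ^ 2
        = (‖v (p.1, p.2 + δ₃ * X)‖₊ : ℝ≥0∞) ^ 2 * (w (p.2 + δ₁ * X))⁻¹ := by
      intro X; rw [hg]; rw [mul_pow, ← ENNReal.inv_pow, hsq2]
    calc G p ^ 2 = (∫⁻ X in Ioi (0 : ℝ), f X * g X) ^ 2 := by
          rw [hG]; simp only [hfg]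
      _ ≤ (∫⁻ X in Ioi (0 : ℝ), f X ^ 2) * (∫⁻ X in Ioi (0 : ℝ), g X ^ 2) :=
          my_lintegral_CS _ f g hfm.aemeasurable hgm.aemeasurable
      _ = A p * B p := by rw [hA, hB]; simp only [hf2, hg2]
  -- bound on A, a.e. in p
  have hAbd : ∀ᵐ p : Y × ℝ ∂volume,
      A p ≤ ENNReal.ofReal |δ₁|⁻¹ * ENNReal.ofReal (M ^ 2) := by
    have hAy : ∀ᵐ y : Y ∂volume, ∀ θ : ℝ,
        (∫⁻ X in Ioi (0 : ℝ), w (θ + δ₁ * X) * (‖u (y, θ + δ₁ * X)‖₊ : ℝ≥0∞) ^ 2)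
          ≤ ENNReal.ofReal |δ₁|⁻¹ * ENNReal.ofReal (M ^ 2) := by
      filter_upwards [huM] with y hy
      intro θ
      have hhm : Measurable fun s : ℝ => w s * (‖u (y, s)‖₊ : ℝ≥0∞) ^ 2 := by
        exact hwm.mul (((hu.comp (measurable_const.prodMk measurable_id)).enorm).pow_const 2)
      calc (∫⁻ X in Ioi (0 : ℝ), w (θ + δ₁ * X) * (‖u (y, θ + δ₁ * X)‖₊ : ℝ≥0∞) ^ 2)
          ≤ ∫⁻ X : ℝ, w (θ + δ₁ * X) * (‖u (y, θ + δ₁ * X)‖₊ : ℝ≥0∞) ^ 2 :=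
            setLIntegral_le_lintegral _ _
        _ = ENNReal.ofReal |δ₁|⁻¹ * ∫⁻ s, w s * (‖u (y, s)‖₊ : ℝ≥0∞) ^ 2 :=
            my_lintegral_affine _ hhm δ₁ θ hδ₁
        _ ≤ ENNReal.ofReal |δ₁|⁻¹ * ENNReal.ofReal (M ^ 2) := mul_le_mul_right hy _
    have h2 := Measure.quasiMeasurePreserving_fst.tendsto_ae
      (μa := (volume : Measure Y).prod (volume : Measure ℝ)) |>.eventually hAy
    rw [← Measure.volume_eq_prod] at h2
    filter_upwards [h2] with p hp
    exact hp p.2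
  -- bound on ∫ B
  have hBy : ∀ y : Y, (∫⁻ θ : ℝ, B (y, θ))
      ≤ ENNReal.ofReal Real.pi * ∫⁻ t : ℝ, (‖v (y, t)‖₊ : ℝ≥0∞) ^ 2 := by
    intro y
    have hkm : Measurable fun q : ℝ × ℝ =>
        (‖v (y, q.1 + δ₃ * q.2)‖₊ : ℝ≥0∞) ^ 2 * (w (q.1 + δ₁ * q.2))⁻¹ := by
      refine Measurable.mul ?_ ?_
      · exact ((hv.comp (measurable_const.prodMk
          (measurable_fst.add (measurable_snd.const_mul δ₃)))).enorm).pow_const 2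
      · exact (hwm.comp (measurable_fst.add (measurable_snd.const_mul δ₁))).inv
    have swap1 : (∫⁻ θ : ℝ, B (y, θ))
        = ∫⁻ X in Ioi (0 : ℝ), ∫⁻ θ : ℝ,
            (‖v (y, θ + δ₃ * X)‖₊ : ℝ≥0∞) ^ 2 * (w (θ + δ₁ * X))⁻¹ := by
      rw [hB]
      exact lintegral_lintegral_swap hkm.aemeasurable
    have step2 : ∀ X : ℝ, (∫⁻ θ : ℝ, (‖v (y, θ + δ₃ * X)‖₊ : ℝ≥0∞) ^ 2 * (w (θ + δ₁ * X))⁻¹)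
        = ∫⁻ t : ℝ, (‖v (y, t)‖₊ : ℝ≥0∞) ^ 2 * (w (t - X))⁻¹ := by
      intro X
      have heq : ∀ θ : ℝ, (‖v (y, θ + δ₃ * X)‖₊ : ℝ≥0∞) ^ 2 * (w (θ + δ₁ * X))⁻¹
          = (fun t : ℝ => (‖v (y, t)‖₊ : ℝ≥0∞) ^ 2 * (w (t - X))⁻¹) (δ₃ * X + θ) := by
        intro θ
        simp only
        have e1 : δ₃ * X + θ = θ + δ₃ * X := by ring
        have e2 : δ₃ * X + θ - X = θ + δ₁ * X := by rw [hδ₃]; ring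
        rw [e1]
        congr 2
        rw [← e1, e2]
      simp_rw [heq]
      exact lintegral_add_left_eq_self
        (fun t : ℝ => (‖v (y, t)‖₊ : ℝ≥0∞) ^ 2 * (w (t - X))⁻¹) (δ₃ * X)
    have swap2 : (∫⁻ X in Ioi (0 : ℝ), ∫⁻ t : ℝ, (‖v (y, t)‖₊ : ℝ≥0∞) ^ 2 * (w (t - X))⁻¹)
        = ∫⁻ t : ℝ, ∫⁻ X in Ioi (0 : ℝ), (‖v (y, t)‖₊ : ℝ≥0∞) ^ 2 * (w (t - X))⁻¹ := by
      refine (lintegral_lintegral_swap ?_).symm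
      refine Measurable.aemeasurable ?_
      exact (((hv.comp (measurable_const.prodMk measurable_fst)).enorm.pow_const 2).mul
        ((hwm.comp (measurable_fst.sub measurable_snd)).inv))
    have hinner : ∀ t : ℝ, (∫⁻ X in Ioi (0 : ℝ), (w (t - X))⁻¹) ≤ ENNReal.ofReal Real.pi := by
      intro t
      calc (∫⁻ X in Ioi (0 : ℝ), (w (t - X))⁻¹)
          ≤ ∫⁻ X : ℝ, (w (t - X))⁻¹ := setLIntegral_le_lintegral _ _
        _ = ∫⁻ X : ℝ, (w (t + (-1) * X))⁻¹ := by
            congr 1; funext X; congr 2; ring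
        _ = ENNReal.ofReal |(-1 : ℝ)|⁻¹ * ∫⁻ s, (w s)⁻¹ :=
            my_lintegral_affine (fun s => (w s)⁻¹) hwm.inv (-1) t (by norm_num)
        _ = ENNReal.ofReal Real.pi := by
            rw [hw]
            rw [my_lintegral_pi]
            norm_num
    calc (∫⁻ θ : ℝ, B (y, θ))
        = ∫⁻ t : ℝ, ∫⁻ X in Ioi (0 : ℝ), (‖v (y, t)‖₊ : ℝ≥0∞) ^ 2 * (w (t - X))⁻¹ := by
          rw [swap1]; simp_rw [step2]; rw [swap2]
      _ = ∫⁻ t : ℝ, (‖v (y, t)‖₊ : ℝ≥0∞) ^ 2 * ∫⁻ X in Ioi (0 : ℝ), (w (t - X))⁻¹ := by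
          congr 1; funext t
          exact lintegral_const_mul' _ _ (ENNReal.pow_ne_top ENNReal.coe_ne_top)
      _ ≤ ∫⁻ t : ℝ, (‖v (y, t)‖₊ : ℝ≥0∞) ^ 2 * ENNReal.ofReal Real.pi :=
          lintegral_mono fun t => mul_le_mul_right (hinner t) _
      _ = ENNReal.ofReal Real.pi * ∫⁻ t : ℝ, (‖v (y, t)‖₊ : ℝ≥0∞) ^ 2 := by
          simp_rw [mul_comm]
          exact lintegral_const_mul' _ _ ENNReal.ofReal_ne_top
  -- B measurable
  have hBm : Measurable B := by
    rw [hB]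
    exact Measurable.lintegral_prod_right' ((hvm.pow_const 2).mul hwqm.inv)
  have hBint : (∫⁻ p : Y × ℝ, B p) ≤ ENNReal.ofReal Real.pi *
      ∫⁻ p : Y × ℝ, (‖v p‖₊ : ℝ≥0∞) ^ 2 := by
    rw [show (volume : Measure (Y × ℝ)) = (volume : Measure Y).prod volume from
      Measure.volume_eq_prod Y ℝ]
    rw [lintegral_prod _ hBm.aemeasurable,
      lintegral_prod (fun p : Y × ℝ => (‖v p‖₊ : ℝ≥0∞) ^ 2) ((hv.enorm.pow_const 2).aemeasurable)]
    calc (∫⁻ y : Y, ∫⁻ θ : ℝ, B (y, θ))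
        ≤ ∫⁻ y : Y, ENNReal.ofReal Real.pi * ∫⁻ t : ℝ, (‖v (y, t)‖₊ : ℝ≥0∞) ^ 2 :=
          lintegral_mono fun y => hBy y
      _ = _ := lintegral_const_mul' _ _ ENNReal.ofReal_ne_top
  -- main estimate for G
  have hGm : Measurable G := by
    rw [hG]
    exact Measurable.lintegral_prod_right' (hum.mul hvm)
  have hmain : (∫⁻ p : Y × ℝ, G p ^ 2) ≤
      ENNReal.ofReal (Real.pi / |δ₁|) * ENNReal.ofReal (M ^ 2) *
        ∫⁻ p : Y × ℝ, (‖v p‖₊ : ℝ≥0∞) ^ 2 := by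
    have hkey : ∀ᵐ p : Y × ℝ ∂volume, G p ^ 2 ≤
        ENNReal.ofReal |δ₁|⁻¹ * ENNReal.ofReal (M ^ 2) * B p := by
      filter_upwards [hAbd] with p hp
      exact (hCS p).trans (mul_le_mul_left hp _)
    calc (∫⁻ p : Y × ℝ, G p ^ 2)
        ≤ ∫⁻ p : Y × ℝ, ENNReal.ofReal |δ₁|⁻¹ * ENNReal.ofReal (M ^ 2) * B p :=
          lintegral_mono_ae hkey
      _ = ENNReal.ofReal |δ₁|⁻¹ * ENNReal.ofReal (M ^ 2) * ∫⁻ p : Y × ℝ, B p :=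
          lintegral_const_mul' _ _
            (ENNReal.mul_ne_top ENNReal.ofReal_ne_top ENNReal.ofReal_ne_top)
      _ ≤ ENNReal.ofReal |δ₁|⁻¹ * ENNReal.ofReal (M ^ 2) *
            (ENNReal.ofReal Real.pi * ∫⁻ p : Y × ℝ, (‖v p‖₊ : ℝ≥0∞) ^ 2) :=
          mul_le_mul_right hBint _
      _ = _ := by
          rw [show ENNReal.ofReal (Real.pi / |δ₁|)
              = ENNReal.ofReal |δ₁|⁻¹ * ENNReal.ofReal Real.pi by
            rw [← ENNReal.ofReal_mul (by positivity)]
            congr 1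
            field_simp]
          ring
  have hGfin : (∫⁻ p : Y × ℝ, G p ^ 2) ≠ ∞ :=
    ne_top_of_le_ne_top (ENNReal.mul_ne_top
      (ENNReal.mul_ne_top ENNReal.ofReal_ne_top ENNReal.ofReal_ne_top) hVfin) hmain
  constructor
  · -- a.e. integrability
    have hae : ∀ᵐ p : Y × ℝ ∂volume, G p ^ 2 < ∞ := ae_lt_top (hGm.pow_const 2) hGfin
    filter_upwards [hae] with p hp
    have hGlt : G p < ∞ := by
      rw [lt_top_iff_ne_top]
      intro h
      rw [h, pow_two, ENNReal.top_mul_top] at hp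
      exact absurd hp (lt_irrefl _)
    refine ⟨?_, ?_⟩
    · refine Measurable.aestronglyMeasurable ?_
      exact ((hu.comp (measurable_const.prodMk
        ((measurable_id.const_mul δ₁).const_add p.2))).mul
        (hv.comp (measurable_const.prodMk ((measurable_id.const_mul δ₃).const_add p.2))))
    · rw [hasFiniteIntegral_def]
      have heq : ∀ X : ℝ, (‖u (p.1, p.2 + δ₁ * X) * v (p.1, p.2 + δ₃ * X)‖₊ : ℝ≥0∞)
          = (‖u (p.1, p.2 + δ₁ * X)‖₊ : ℝ≥0∞) * (‖v (p.1, p.2 + δ₃ * X)‖₊ : ℝ≥0∞) := by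
        intro X
        rw [nnnorm_mul, ENNReal.coe_mul]
      simp_rw [enorm_eq_nnnorm, heq]
      exact hGlt
  · -- the norm bound
    refine le_trans ?_ hmain
    refine lintegral_mono fun p => ?_
    have h1 : (‖∫ X in Ioi (0 : ℝ), u (p.1, p.2 + δ₁ * X) * v (p.1, p.2 + δ₃ * X)‖₊ : ℝ≥0∞)
        ≤ G p := by
      refine le_trans (enorm_integral_le_lintegral_enorm _) ?_
      rw [hG]
      refine le_of_eq ?_
      congr 1
      funext X
      rw [enorm_eq_nnnorm, nnnorm_mul, ENNReal.coe_mul]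
    exact pow_le_pow_left' h1 2

theorem stmt8 (d : ℕ) (hd : 1 ≤ d)
    (δ₁ δ₃ : ℝ) (hδ₁ : δ₁ ≠ 0) (hδ₃ : δ₃ = 1 + δ₁) (hδ₃' : δ₃ ≠ 0)
    (u v : EuclideanSpace ℝ (Fin (d - 1)) × ℝ → ℂ)
    (hu : Measurable u) (hv : Measurable v)
    (M : ℝ) (hM : 0 ≤ M)
    (huM : ∀ᵐ y : EuclideanSpace ℝ (Fin (d - 1)) ∂volume,
      (∫⁻ θ : ℝ, ENNReal.ofReal (1 + θ ^ 2) * (‖u (y, θ)‖₊ : ℝ≥0∞) ^ 2) ≤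
        ENNReal.ofReal (M ^ 2))
    (hvL2 : MemLp v 2 volume) :
    (∀ᵐ p : EuclideanSpace ℝ (Fin (d - 1)) × ℝ ∂volume,
      IntegrableOn (fun X => u (p.1, p.2 + δ₁ * X) * v (p.1, p.2 + δ₃ * X)) (Set.Ioi 0)) ∧
    (∫⁻ p : EuclideanSpace ℝ (Fin (d - 1)) × ℝ,
        (‖∫ X in Set.Ioi (0 : ℝ), u (p.1, p.2 + δ₁ * X) * v (p.1, p.2 + δ₃ * X)‖₊ : ℝ≥0∞) ^ 2) ≤
      ENNReal.ofReal (Real.pi / |δ₁|) * ENNReal.ofReal (M ^ 2) *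
        ∫⁻ p : EuclideanSpace ℝ (Fin (d - 1)) × ℝ, (‖v p‖₊ : ℝ≥0∞) ^ 2 := by
  have h3 : ∀ x : ℝ≥0∞, x ^ (2 : ℝ) = x ^ 2 := fun x => by
    rw [show (2 : ℝ) = ((2 : ℕ) : ℝ) by norm_num, ENNReal.rpow_natCast]
  have hVfin : (∫⁻ p : EuclideanSpace ℝ (Fin (d - 1)) × ℝ, (‖v p‖₊ : ℝ≥0∞) ^ 2) ≠ ∞ := by
    have h1 := hvL2.2
    rw [eLpNorm_eq_lintegral_rpow_enorm_toReal (by norm_num) (by norm_num)] at h1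
    simp only [ENNReal.toReal_ofNat, enorm_eq_nnnorm] at h1
    intro hcon
    have h2 : (∫⁻ p : EuclideanSpace ℝ (Fin (d - 1)) × ℝ, (‖v p‖₊ : ℝ≥0∞) ^ (2 : ℝ)) = ∞ := by
      simp_rw [h3]; exact hcon
    rw [h2, ENNReal.top_rpow_of_pos (by norm_num)] at h1
    exact absurd h1 (lt_irrefl _)
  exact my_key δ₁ δ₃ hδ₁ hδ₃ u v hu hv M huM hVfin
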